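/- Let ω : [0,1) → [0,∞) be integrable with ω̂(r) = ∫_r^1 ω(s) ds. Suppose there exists η > 0 and C > 0 such that ∫₀^1 s^x ω(s) ds ≤ C (y/x)^η ∫₀^1 s^y ω(s) ds for all 0 < x ≤ y < ∞. Then there exists C' > 1 such that ω̂(r) ≤ C' ω̂((1+r)/2) for all 0 ≤ r < 1, i.e., ω is a doubling weight. -/

import Mathlib

open MeasureTheory

theorem moment_condition_to_doubling (ω : ℝ → ℝ) (hω : ∀ s, 0 ≤ ω s)
    (hint : IntegrableOn ω (Set.Ico (0:ℝ) 1))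
    (η C : ℝ) (hη : 0 < η) (hC : 0 < C)
    (h : ∀ x y : ℝ, 0 < x → x ≤ y →
      (∫ s in (0:ℝ)..1, s ^ x * ω s) ≤ C * (y / x) ^ η * ∫ s in (0:ℝ)..1, s ^ y * ω s) :
    ∃ C' : ℝ, 1 < C' ∧ ∀ r : ℝ, 0 ≤ r → r < 1 →
      (∫ s in r..1, ω s) ≤ C' * ∫ s in ((1 + r) / 2)..1, ω s := by
  -- basic integrability facts
  have hI : IntegrableOn ω (Set.Icc (0:ℝ) 1) := by
    rwa [integrableOn_Icc_iff_integrableOn_Ico]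
  have hωi : ∀ a b : ℝ, 0 ≤ a → a ≤ 1 → 0 ≤ b → b ≤ 1 →
      IntervalIntegrable ω volume a b := by
    intro a b ha ha1 hb hb1
    rw [intervalIntegrable_iff]
    exact hI.mono_set (Set.uIoc_subset_uIcc.trans (Set.uIcc_subset_Icc ⟨ha, ha1⟩ ⟨hb, hb1⟩))
  have hPI : ∀ x : ℝ, 0 ≤ x → IntegrableOn (fun s => s ^ x * ω s) (Set.Icc (0:ℝ) 1) := by
    intro x hx
    refine Integrable.mono' hI
      (((Real.continuous_rpow_const hx).measurable.aestronglyMeasurable).mul hI.1) ?_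
    refine (ae_restrict_iff' measurableSet_Icc).mpr (Filter.Eventually.of_forall ?_)
    intro s hs
    have h1 : s ^ x ≤ 1 := Real.rpow_le_one hs.1 hs.2 hx
    have h2 : 0 ≤ s ^ x := Real.rpow_nonneg hs.1 x
    rw [Real.norm_eq_abs, abs_of_nonneg (mul_nonneg h2 (hω s))]
    nlinarith [hω s]
  have hMi : ∀ x : ℝ, 0 ≤ x → ∀ a b : ℝ, 0 ≤ a → a ≤ 1 → 0 ≤ b → b ≤ 1 →
      IntervalIntegrable (fun s => s ^ x * ω s) volume a b := by
    intro x hx a b ha ha1 hb hb1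
    rw [intervalIntegrable_iff]
    exact (hPI x hx).mono_set
      (Set.uIoc_subset_uIcc.trans (Set.uIcc_subset_Icc ⟨ha, ha1⟩ ⟨hb, hb1⟩))
  -- nonnegativity
  have hWnn : ∀ a : ℝ, a ≤ 1 → 0 ≤ ∫ s in a..1, ω s := fun a ha =>
    intervalIntegral.integral_nonneg ha (fun u _ => hω u)
  have hMnn : ∀ x a b : ℝ, 0 ≤ a → a ≤ b → 0 ≤ ∫ s in a..b, s ^ x * ω s := fun x a b ha hab =>
    intervalIntegral.integral_nonneg hab
      (fun u hu => mul_nonneg (Real.rpow_nonneg (le_trans ha hu.1) x) (hω u))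
  -- Lemma B : lower bound for moments by tails
  have hB : ∀ r x : ℝ, 0 ≤ r → r ≤ 1 → 0 ≤ x →
      r ^ x * ∫ s in r..1, ω s ≤ ∫ s in (0:ℝ)..1, s ^ x * ω s := by
    intro r x hr hr1 hx
    have h1 := hMi x hx 0 r le_rfl (by norm_num) hr hr1
    have h2 := hMi x hx r 1 hr hr1 (by norm_num) le_rfl
    have hsplit := intervalIntegral.integral_add_adjacent_intervals h1 h2
    have hpos : 0 ≤ ∫ s in (0:ℝ)..r, s ^ x * ω s := hMnn x 0 r le_rfl hr
    have hmono : (∫ s in r..1, r ^ x * ω s) ≤ ∫ s in r..1, s ^ x * ω s := by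
      refine intervalIntegral.integral_mono_on hr1 ((hωi r 1 hr hr1 (by norm_num) le_rfl).const_mul _) h2 ?_
      intro u hu
      exact mul_le_mul_of_nonneg_right (Real.rpow_le_rpow hr hu.1 hx) (hω u)
    rw [intervalIntegral.integral_const_mul] at hmono
    linarith
  -- Lemma C : upper bound for higher moments
  have hCineq : ∀ t x y : ℝ, 0 < t → t ≤ 1 → 0 < x → x ≤ y →
      (∫ s in (0:ℝ)..1, s ^ y * ω s) ≤
        t ^ (y - x) * (∫ s in (0:ℝ)..1, s ^ x * ω s) + ∫ s in t..1, ω s := by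
    intro t x y ht ht1 hx hxy
    have hy : 0 < y := lt_of_lt_of_le hx hxy
    have h1 := hMi y hy.le 0 t le_rfl (by norm_num) ht.le ht1
    have h2 := hMi y hy.le t 1 ht.le ht1 (by norm_num) le_rfl
    have hsplit := intervalIntegral.integral_add_adjacent_intervals h1 h2
    have htnn : 0 ≤ t ^ (y - x) := Real.rpow_nonneg ht.le (y - x)
    have e1 : (∫ s in (0:ℝ)..t, s ^ y * ω s) ≤
        ∫ s in (0:ℝ)..t, t ^ (y - x) * (s ^ x * ω s) := by
      refine intervalIntegral.integral_mono_on ht.le h1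
        ((hMi x hx.le 0 t le_rfl (by norm_num) ht.le ht1).const_mul _) ?_
      intro u hu
      rcases eq_or_lt_of_le hu.1 with h0 | h0
      · rw [← h0, Real.zero_rpow hy.ne', Real.zero_rpow hx.ne']
        simp
      · have : u ^ y = u ^ (y - x) * u ^ x := by
          rw [← Real.rpow_add h0]; ring_nf
        rw [this, mul_assoc]
        refine mul_le_mul_of_nonneg_right
          (Real.rpow_le_rpow h0.le hu.2 (by linarith)) ?_
        exact mul_nonneg (Real.rpow_nonneg h0.le x) (hω u)
    rw [intervalIntegral.integral_const_mul] at e1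
    have e2 : (∫ s in (0:ℝ)..t, s ^ x * ω s) ≤ ∫ s in (0:ℝ)..1, s ^ x * ω s := by
      have hs2 := intervalIntegral.integral_add_adjacent_intervals
        (hMi x hx.le 0 t le_rfl (by norm_num) ht.le ht1)
        (hMi x hx.le t 1 ht.le ht1 (by norm_num) le_rfl)
      have := hMnn x t 1 ht.le ht1
      linarith
    have e3 : (∫ s in t..1, s ^ y * ω s) ≤ ∫ s in t..1, ω s := by
      refine intervalIntegral.integral_mono_on ht1 h2 (hωi t 1 ht.le ht1 (by norm_num) le_rfl) ?_
      intro u hu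
      have h1u : u ^ y ≤ 1 := Real.rpow_le_one (le_trans ht.le hu.1) hu.2 hy.le
      nlinarith [hω u, Real.rpow_nonneg (le_trans ht.le hu.1) y]
    have e4 := mul_le_mul_of_nonneg_left e2 htnn
    linarith
  -- choice of K
  obtain ⟨K, hK1, hK2⟩ : ∃ K : ℝ, 1 ≤ K ∧ C * K ^ η * Real.exp (1 - K) ≤ 1 / 2 := by
    have h0 := tendsto_rpow_mul_exp_neg_mul_atTop_nhds_zero η 1 one_pos
    have h1 : Filter.Tendsto (fun K : ℝ => C * K ^ η * Real.exp (1 - K))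
        Filter.atTop (nhds 0) := by
      have h2 := (h0.const_mul (C * Real.exp 1))
      rw [mul_zero] at h2
      refine h2.congr fun K => ?_
      rw [Real.exp_sub, neg_one_mul, Real.exp_neg]
      field_simp [Real.exp_ne_zero]
    have h3 : ∀ᶠ K : ℝ in Filter.atTop, C * K ^ η * Real.exp (1 - K) ≤ 1 / 2 :=
      h1.eventually (eventually_le_nhds (by norm_num))
    exact ((Filter.eventually_ge_atTop (1:ℝ)).and h3).exists
  have hKnn : 0 ≤ C * K ^ η := mul_nonneg hC.le (Real.rpow_nonneg (by linarith) η)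
  -- Lemma E : main moment estimate
  have hE : ∀ t x : ℝ, 0 < t → t < 1 → 0 < x → x * Real.log t ≤ -1 →
      (∫ s in (0:ℝ)..1, s ^ x * ω s) ≤ 2 * C * K ^ η * ∫ s in t..1, ω s := by
    intro t x ht ht1 hx hlog
    have hxy : x ≤ K * x := le_mul_of_one_le_left hx.le hK1
    have h1 := h x (K * x) hx hxy
    have hdiv : K * x / x = K := mul_div_cancel_right₀ K hx.ne'
    rw [hdiv] at h1
    have h2 := hCineq t x (K * x) ht ht1.le hx hxy
    have hKx : t ^ (K * x - x) ≤ Real.exp (1 - K) := by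
      rw [Real.rpow_def_of_pos ht]
      apply Real.exp_le_exp.mpr
      have heq : Real.log t * (K * x - x) = (K - 1) * (x * Real.log t) := by ring
      rw [heq]
      calc (K - 1) * (x * Real.log t) ≤ (K - 1) * (-1) :=
            mul_le_mul_of_nonneg_left hlog (by linarith)
        _ = 1 - K := by ring
    have hMxnn : 0 ≤ ∫ s in (0:ℝ)..1, s ^ x * ω s := hMnn x 0 1 le_rfl (by norm_num)
    have hWtnn : 0 ≤ ∫ s in t..1, ω s := hWnn t ht1.le
    have h3 : (∫ s in (0:ℝ)..1, s ^ (K * x) * ω s) ≤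
        Real.exp (1 - K) * (∫ s in (0:ℝ)..1, s ^ x * ω s) + ∫ s in t..1, ω s := by
      have := mul_le_mul_of_nonneg_right hKx hMxnn
      linarith
    have h4 := mul_le_mul_of_nonneg_left h3 hKnn
    have h5 := mul_le_mul_of_nonneg_right hK2 hMxnn
    nlinarith
  by_cases hdeg : (∫ s in (3/4 : ℝ)..1, ω s) = 0
  · -- degenerate case : ω vanishes a.e.
    have hlog34 : (4:ℝ) * Real.log (3/4) ≤ -1 := by
      have := Real.log_le_sub_one_of_pos (show (0:ℝ) < 3/4 by norm_num)
      linarith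
    have hM4 : (∫ s in (0:ℝ)..1, s ^ (4:ℝ) * ω s) = 0 := by
      have := hE (3/4) 4 (by norm_num) (by norm_num) (by norm_num) hlog34
      rw [hdeg, mul_zero] at this
      exact le_antisymm this (hMnn 4 0 1 le_rfl (by norm_num))
    have hae : ∀ᵐ s ∂(volume.restrict (Set.Ioc (0:ℝ) 1)), ω s = 0 := by
      have hint4 : IntegrableOn (fun s => s ^ (4:ℝ) * ω s) (Set.Ioc (0:ℝ) 1) :=
        (hPI 4 (by norm_num)).mono_set Set.Ioc_subset_Icc_self
      have hnn : 0 ≤ᵐ[volume.restrict (Set.Ioc (0:ℝ) 1)] fun s => s ^ (4:ℝ) * ω s := by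
        refine (ae_restrict_iff' measurableSet_Ioc).mpr (Filter.Eventually.of_forall ?_)
        intro s hs
        exact mul_nonneg (Real.rpow_nonneg hs.1.le 4) (hω s)
      have hz : (∫ s in Set.Ioc (0:ℝ) 1, s ^ (4:ℝ) * ω s) = 0 := by
        rwa [intervalIntegral.integral_of_le (by norm_num : (0:ℝ) ≤ 1)] at hM4
      have := (integral_eq_zero_iff_of_nonneg_ae hnn hint4).mp hz
      filter_upwards [this, ae_restrict_mem measurableSet_Ioc] with s hs hmem
      have hpos : (0:ℝ) < s ^ (4:ℝ) := Real.rpow_pos_of_pos hmem.1 4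
      have : s ^ (4:ℝ) * ω s = 0 := hs
      exact (mul_eq_zero.mp this).resolve_left hpos.ne' |>.symm ▸ rfl
    have hz : ∀ a : ℝ, 0 ≤ a → a ≤ 1 → (∫ s in a..1, ω s) = 0 := by
      intro a ha ha1
      rw [intervalIntegral.integral_of_le ha1]
      refine integral_eq_zero_of_ae ?_
      exact ae_restrict_of_ae_restrict_of_subset (Set.Ioc_subset_Ioc_left ha) hae
    refine ⟨2, one_lt_two, fun r hr hr1 => ?_⟩
    rw [hz r hr hr1.le, hz ((1 + r) / 2) (by linarith) (by linarith)]
    norm_num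
  · -- nondegenerate case
    have hW34 : 0 < ∫ s in (3/4:ℝ)..1, ω s :=
      lt_of_le_of_ne (hWnn _ (by norm_num)) (Ne.symm hdeg)
    set W0 := ∫ s in (0:ℝ)..1, ω s with hW0
    set A := Real.exp 4 * (2 * C * K ^ η) with hA
    refine ⟨max 2 (max A (W0 / ∫ s in (3/4:ℝ)..1, ω s)), lt_of_lt_of_le one_lt_two (le_max_left _ _), ?_⟩
    intro r hr hr1
    have hC'nn : (0:ℝ) ≤ max 2 (max A (W0 / ∫ s in (3/4:ℝ)..1, ω s)) :=
      le_trans (by norm_num) (le_max_left _ _)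
    have hmidnn : 0 ≤ ∫ s in ((1 + r) / 2)..1, ω s := hWnn _ (by linarith)
    rcases lt_or_ge r (1/2) with hhalf | hhalf
    · -- small r
      have hWr : (∫ s in r..1, ω s) ≤ W0 := by
        have hs := intervalIntegral.integral_add_adjacent_intervals
          (hωi 0 r le_rfl (by norm_num) hr hr1.le)
          (hωi r 1 hr hr1.le (by norm_num) le_rfl)
        have h0r : 0 ≤ ∫ s in (0:ℝ)..r, ω s :=
          intervalIntegral.integral_nonneg hr (fun u _ => hω u)
        rw [hW0]; linarith
      have hmono : (∫ s in (3/4:ℝ)..1, ω s) ≤ ∫ s in ((1 + r) / 2)..1, ω s := by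
        have hle : (1 + r) / 2 ≤ 3/4 := by linarith
        have hs := intervalIntegral.integral_add_adjacent_intervals
          (hωi ((1 + r) / 2) (3/4) (by linarith) (by linarith) (by norm_num) (by norm_num))
          (hωi (3/4) 1 (by norm_num) (by norm_num) (by norm_num) le_rfl)
        have h0r : 0 ≤ ∫ s in ((1 + r) / 2)..(3/4:ℝ), ω s :=
          intervalIntegral.integral_nonneg hle (fun u _ => hω u)
        linarith
      have hratio : W0 / (∫ s in (3/4:ℝ)..1, ω s) ≤
          max 2 (max A (W0 / ∫ s in (3/4:ℝ)..1, ω s)) :=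
        le_trans (le_max_right _ _) (le_max_right _ _)
      have hW0eq : W0 = (W0 / (∫ s in (3/4:ℝ)..1, ω s)) * ∫ s in (3/4:ℝ)..1, ω s := by
        field_simp
      calc (∫ s in r..1, ω s) ≤ W0 := hWr
        _ = (W0 / (∫ s in (3/4:ℝ)..1, ω s)) * ∫ s in (3/4:ℝ)..1, ω s := hW0eq
        _ ≤ max 2 (max A (W0 / ∫ s in (3/4:ℝ)..1, ω s)) * ∫ s in ((1 + r) / 2)..1, ω s :=
            mul_le_mul hratio hmono hW34.le hC'nn
    · -- r ≥ 1/2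
      have hr0 : (0:ℝ) < r := by linarith
      set t := (1 + r) / 2 with htdef
      have ht0 : 0 < t := by rw [htdef]; linarith
      have ht1 : t < 1 := by rw [htdef]; linarith
      set x := 2 / (1 - r) with hxdef
      have h1r : (0:ℝ) < 1 - r := by linarith
      have hx : 0 < x := div_pos two_pos h1r
      have hlog : x * Real.log t ≤ -1 := by
        have hlt := Real.log_le_sub_one_of_pos ht0
        have h1 : x * Real.log t ≤ x * (t - 1) := mul_le_mul_of_nonneg_left hlt hx.le
        have h2 : x * (t - 1) = -1 := by
          rw [hxdef, htdef]; field_simp; ring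
        linarith
      have hpow : Real.exp (-4) ≤ r ^ x := by
        rw [Real.rpow_def_of_pos hr0]
        apply Real.exp_le_exp.mpr
        have hinv := Real.log_le_sub_one_of_pos (inv_pos.mpr hr0)
        rw [Real.log_inv] at hinv
        -- log r ≥ 1 - r⁻¹
        have hlogr : 1 - r⁻¹ ≤ Real.log r := by linarith
        have h1 : (1 - r⁻¹) * x ≤ Real.log r * x := mul_le_mul_of_nonneg_right hlogr hx.le
        have h2 : -4 ≤ (1 - r⁻¹) * x := by
          have he : (1 - r⁻¹) * x = -(2 / r) := by
            rw [hxdef]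
            field_simp
            ring
          have h2r : 2 / r ≤ 4 := by
            rw [div_le_iff₀ hr0]; linarith
          rw [he]; linarith
        linarith
      have hBr := hB r x hr0.le hr1.le hx.le
      have hEr := hE t x ht0 ht1 hx hlog
      have hWrnn : 0 ≤ ∫ s in r..1, ω s := hWnn r hr1.le
      have step1 : (∫ s in r..1, ω s) ≤ Real.exp 4 * ∫ s in (0:ℝ)..1, s ^ x * ω s := by
        have h4 : Real.exp (-4) * (∫ s in r..1, ω s) ≤ r ^ x * ∫ s in r..1, ω s :=
          mul_le_mul_of_nonneg_right hpow hWrnn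
        have h5 : Real.exp (-4) * (∫ s in r..1, ω s) ≤ ∫ s in (0:ℝ)..1, s ^ x * ω s :=
          le_trans h4 hBr
        calc (∫ s in r..1, ω s)
            = Real.exp 4 * (Real.exp (-4) * ∫ s in r..1, ω s) := by
              rw [← mul_assoc, ← Real.exp_add]; norm_num
          _ ≤ Real.exp 4 * ∫ s in (0:ℝ)..1, s ^ x * ω s :=
              mul_le_mul_of_nonneg_left h5 (Real.exp_pos 4).le
      have hAle : A ≤ max 2 (max A (W0 / ∫ s in (3/4:ℝ)..1, ω s)) :=
        le_trans (le_max_left _ _) (le_max_right _ _)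
      calc (∫ s in r..1, ω s)
          ≤ Real.exp 4 * ∫ s in (0:ℝ)..1, s ^ x * ω s := step1
        _ ≤ Real.exp 4 * (2 * C * K ^ η * ∫ s in t..1, ω s) :=
            mul_le_mul_of_nonneg_left hEr (Real.exp_pos 4).le
        _ = A * ∫ s in t..1, ω s := by rw [hA]; ring
        _ ≤ max 2 (max A (W0 / ∫ s in (3/4:ℝ)..1, ω s)) * ∫ s in ((1 + r) / 2)..1, ω s :=
            mul_le_mul_of_nonneg_right hAle hmidnn
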